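/- Fix 0 < v_low ≤ v̄ and an integer n ≥ 1. Let prices v_low = v₁ ≤ v₂ ≤ ⋯ ≤ vₙ ≤ v̄ be given, and set v_{n+1} := v̄. Then the supremum, over probability vectors (x₁,…,xₙ) (xᵢ ≥ 0, Σᵢxᵢ = 1), of the competitive ratio of the mechanism that posts price vᵢ with probability xᵢ over the support ambiguity set 𝓕_supp equals r = ( v₂/v₁ + Σ_{i=2}^{n} (v_{i+1} − vᵢ)/vᵢ )^{-1}, and it is attained by x₁ = r·v₂/v₁ and xᵢ = r·(v_{i+1} − vᵢ)/vᵢ for i = 2,…,n. -/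

import Mathlib

open MeasureTheory Set

noncomputable section

/-- Hindsight optimal revenue: `OPT(F) = sup_{p ∈ [0, v̄]} p · F([p, v̄])`. -/
def hindsightOpt (vbar : ℝ) (F : Measure ℝ) : ℝ :=
  ⨆ p : Icc (0 : ℝ) vbar, (p : ℝ) * (F (Icc (p : ℝ) vbar)).toReal

/-- The support ambiguity set: probability measures on `[0, v̄]` giving full mass to
`[v_low, v̄]`. -/
def Fsupp (vlow vbar : ℝ) : Set (Measure ℝ) :=
  {F | IsProbabilityMeasure F ∧ F (Icc (0 : ℝ) vbar) = 1 ∧ F (Icc vlow vbar) = 1}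

/-- Expected revenue of the `n`-level mechanism posting price `v i` with probability `x i`. -/
def mechRev (vbar : ℝ) (n : ℕ) (v x : ℕ → ℝ) (F : Measure ℝ) : ℝ :=
  ∑ i ∈ Finset.Icc 1 n, v i * x i * (F (Icc (v i) vbar)).toReal

/-- Competitive ratio of the `n`-level mechanism over the support ambiguity set. -/
def suppCR (vlow vbar : ℝ) (n : ℕ) (v x : ℕ → ℝ) : ℝ :=
  ⨅ F : ↥(Fsupp vlow vbar), mechRev vbar n v x F.1 / hindsightOpt vbar F.1

lemma aux_split (n : ℕ) (hn : 1 ≤ n) (f : ℕ → ℝ) :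
    ∑ i ∈ Finset.Icc 1 n, f i = f 1 + ∑ i ∈ Finset.Icc 2 n, f i := by
  rw [← Finset.Ico_add_one_right_eq_Icc 1 n, ← Finset.Ico_add_one_right_eq_Icc 2 n,
      ← Finset.sum_Ico_consecutive f (by omega : (1:ℕ) ≤ 2) (by omega : (2:ℕ) ≤ n+1)]
  norm_num

lemma aux_split_at (n k : ℕ) (h2 : k ≤ n) (f : ℕ → ℝ) :
    ∑ i ∈ Finset.Icc 1 n, f i = ∑ i ∈ Finset.Icc 1 k, f i + ∑ i ∈ Finset.Icc (k+1) n, f i := by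
  rw [← Finset.Ico_add_one_right_eq_Icc 1 n, ← Finset.Ico_add_one_right_eq_Icc 1 k, ← Finset.Ico_add_one_right_eq_Icc (k+1) n,
      ← Finset.sum_Ico_consecutive f (by omega : (1:ℕ) ≤ k+1) (by omega : k+1 ≤ n+1)]

lemma aux_telescope (v : ℕ → ℝ) (m : ℕ) :
    ∑ i ∈ Finset.Icc 1 m, (v (i+1) - v i) = v (m+1) - v 1 := by
  induction m with
  | zero => simp
  | succ k ih => rw [Finset.sum_Icc_succ_top (Nat.succ_le_succ (Nat.zero_le k)), ih]; ring

lemma aux_dirac_Icc_one {c a b : ℝ} (h1 : a ≤ c) (h2 : c ≤ b) :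
    Measure.dirac c (Icc a b) = 1 := by
  rw [Measure.dirac_apply]
  simp [Set.indicator_apply, Set.mem_Icc, h1, h2]

lemma aux_dirac_Icc_zero {c a b : ℝ} (h1 : c < a) :
    Measure.dirac c (Icc a b) = 0 := by
  rw [Measure.dirac_apply]
  simp [Set.indicator_apply, Set.mem_Icc, h1, not_le.2 h1]

lemma aux_dirac_mem {vlow vbar c : ℝ} (hlow : 0 < vlow) (h1 : vlow ≤ c) (h2 : c ≤ vbar) :
    Measure.dirac c ∈ Fsupp vlow vbar :=
  ⟨Measure.dirac.isProbabilityMeasure,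
   aux_dirac_Icc_one (hlow.le.trans h1) h2, aux_dirac_Icc_one h1 h2⟩

lemma aux_hindsight_dirac {vbar c : ℝ} (h0 : 0 ≤ c) (h2 : c ≤ vbar) :
    hindsightOpt vbar (Measure.dirac c) = c := by
  have hne : Nonempty (Icc (0:ℝ) vbar) := ⟨⟨0, le_refl 0, h0.trans h2⟩⟩
  have hub : ∀ p : Icc (0:ℝ) vbar,
      (p : ℝ) * ((Measure.dirac c) (Icc (p : ℝ) vbar)).toReal ≤ c := by
    rintro ⟨p, hp0, hpv⟩
    by_cases hpc : p ≤ c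
    · rw [aux_dirac_Icc_one hpc h2]; simpa using hpc
    · rw [aux_dirac_Icc_zero (not_le.1 hpc)]; simpa using h0
  refine le_antisymm (ciSup_le hub) ?_
  have hb : BddAbove (Set.range fun p : Icc (0:ℝ) vbar =>
      (p : ℝ) * ((Measure.dirac c) (Icc (p : ℝ) vbar)).toReal) := by
    refine ⟨c, ?_⟩; rintro y ⟨p, rfl⟩; exact hub p
  have := le_ciSup hb (⟨c, h0, h2⟩ : Icc (0:ℝ) vbar)
  simpa [hindsightOpt, aux_dirac_Icc_one (le_refl c) h2] using this

lemma aux_le_hindsight {vlow vbar : ℝ} {F : Measure ℝ} (hF : F ∈ Fsupp vlow vbar)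
    {p : ℝ} (hp0 : 0 ≤ p) (hpv : p ≤ vbar) :
    p * (F (Icc p vbar)).toReal ≤ hindsightOpt vbar F := by
  obtain ⟨hprob, -, -⟩ := hF
  have hb : BddAbove (Set.range fun q : Icc (0:ℝ) vbar =>
      (q : ℝ) * (F (Icc (q : ℝ) vbar)).toReal) := by
    refine ⟨vbar, ?_⟩; rintro y ⟨⟨q, hq0, hqv⟩, rfl⟩
    have h1 : (F (Icc (q:ℝ) vbar)).toReal ≤ 1 := by
      have := ENNReal.toReal_mono (by simp) (prob_le_one (μ := F) (s := Icc q vbar))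
      simpa using this
    calc (q:ℝ) * (F (Icc (q:ℝ) vbar)).toReal ≤ q * 1 :=
          mul_le_mul_of_nonneg_left h1 hq0
      _ ≤ vbar := by simpa using hqv
  exact le_ciSup hb (⟨p, hp0, hpv⟩ : Icc (0:ℝ) vbar)

lemma aux_hindsight_ge {vlow vbar : ℝ} (hlow : 0 < vlow) (hbar : vlow ≤ vbar)
    {F : Measure ℝ} (hF : F ∈ Fsupp vlow vbar) :
    vlow ≤ hindsightOpt vbar F := by
  have := aux_le_hindsight hF hlow.le hbar
  rwa [hF.2.2, ENNReal.toReal_one, mul_one] at this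

lemma aux_mechRev_nonneg {vbar : ℝ} {n : ℕ} {v x : ℕ → ℝ}
    (h : ∀ i ∈ Finset.Icc 1 n, 0 ≤ v i * x i) (F : Measure ℝ) :
    0 ≤ mechRev vbar n v x F :=
  Finset.sum_nonneg fun i hi => mul_nonneg (h i hi) ENNReal.toReal_nonneg

lemma aux_suppCR_le {vlow vbar : ℝ} (hlow : 0 < vlow) (hbar : vlow ≤ vbar)
    {n : ℕ} {v x : ℕ → ℝ} (h : ∀ i ∈ Finset.Icc 1 n, 0 ≤ v i * x i)
    {F : Measure ℝ} (hF : F ∈ Fsupp vlow vbar) :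
    suppCR vlow vbar n v x ≤ mechRev vbar n v x F / hindsightOpt vbar F := by
  have hb : BddBelow (Set.range fun G : ↥(Fsupp vlow vbar) =>
      mechRev vbar n v x G.1 / hindsightOpt vbar G.1) := by
    refine ⟨0, ?_⟩; rintro y ⟨G, rfl⟩
    exact div_nonneg (aux_mechRev_nonneg h G.1)
      (hlow.le.trans (aux_hindsight_ge hlow hbar G.2))
  exact ciInf_le hb (⟨F, hF⟩ : ↥(Fsupp vlow vbar))

lemma aux_suppCR_nonneg {vlow vbar : ℝ} (hlow : 0 < vlow) (hbar : vlow ≤ vbar)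
    {n : ℕ} {v x : ℕ → ℝ} (h : ∀ i ∈ Finset.Icc 1 n, 0 ≤ v i * x i) :
    0 ≤ suppCR vlow vbar n v x := by
  haveI : Nonempty ↥(Fsupp vlow vbar) :=
    ⟨⟨Measure.dirac vlow, aux_dirac_mem hlow (le_refl _) hbar⟩⟩
  exact le_ciInf fun G => div_nonneg (aux_mechRev_nonneg h G.1)
      (hlow.le.trans (aux_hindsight_ge hlow hbar G.2))

lemma aux_abel (v x : ℕ → ℝ) :
    ∀ n : ℕ, (∀ k, 1 ≤ k → k ≤ n → v k ≠ 0) →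
    ∑ k ∈ Finset.Icc 1 n, ((v k)⁻¹ - (v (k+1))⁻¹) * (∑ i ∈ Finset.Icc 1 k, v i * x i)
      + (∑ i ∈ Finset.Icc 1 n, v i * x i) * (v (n+1))⁻¹
    = ∑ k ∈ Finset.Icc 1 n, x k := by
  intro n
  induction n with
  | zero => intro _; simp
  | succ m ih =>
    intro hne
    have h1 : v (m+1) ≠ 0 := hne (m+1) (Nat.succ_le_succ (Nat.zero_le m)) (le_refl _)
    have ihm := ih (fun k hk1 hk2 => hne k hk1 (hk2.trans (Nat.le_succ m)))
    rw [Finset.sum_Icc_succ_top (Nat.succ_le_succ (Nat.zero_le m)) x,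
        Finset.sum_Icc_succ_top (Nat.succ_le_succ (Nat.zero_le m))
          (fun k => ((v k)⁻¹ - (v (k+1))⁻¹) * (∑ i ∈ Finset.Icc 1 k, v i * x i)),
        Finset.sum_Icc_succ_top (Nat.succ_le_succ (Nat.zero_le m))
          (fun i => v i * x i), ← ihm]
    field_simp
    ring

/-- For fixed prices `v_low = v₁ ≤ ⋯ ≤ vₙ ≤ v̄` (with `v_{n+1} = v̄`), the supremum over
probability vectors of the competitive ratio over the support ambiguity set equals
`r = (v₂/v₁ + ∑_{i=2}^n (v_{i+1} - vᵢ)/vᵢ)⁻¹`, attained by `x₁ = r·v₂/v₁`,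
`xᵢ = r·(v_{i+1} - vᵢ)/vᵢ`. -/
theorem stmt0 (vlow vbar : ℝ) (hlow : 0 < vlow) (hbar : vlow ≤ vbar)
    (n : ℕ) (hn : 1 ≤ n) (v : ℕ → ℝ)
    (hv1 : v 1 = vlow)
    (hmono : ∀ i, 1 ≤ i → i < n → v i ≤ v (i + 1))
    (hvn : v n ≤ vbar) (hvtop : v (n + 1) = vbar)
    (r : ℝ)
    (hr : r = (v 2 / v 1 + ∑ i ∈ Finset.Icc 2 n, (v (i + 1) - v i) / v i)⁻¹) :
    (∀ x : ℕ → ℝ, (∀ i ∈ Finset.Icc 1 n, 0 ≤ x i) →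
        ∑ i ∈ Finset.Icc 1 n, x i = 1 → suppCR vlow vbar n v x ≤ r) ∧
    (∃ x : ℕ → ℝ, (∀ i ∈ Finset.Icc 1 n, 0 ≤ x i) ∧
        ∑ i ∈ Finset.Icc 1 n, x i = 1 ∧
        x 1 = r * (v 2 / v 1) ∧
        (∀ i, 2 ≤ i → i ≤ n → x i = r * ((v (i + 1) - v i) / v i)) ∧
        suppCR vlow vbar n v x = r) := by
  classical
  have hv1pos : 0 < v 1 := hv1 ▸ hlow
  have hmono' : ∀ i, 1 ≤ i → i ≤ n → v i ≤ v (i + 1) := by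
    intro i h1 h2
    rcases lt_or_eq_of_le h2 with h | h
    · exact hmono i h1 h
    · subst h; rw [hvtop]; exact hvn
  have hchain : ∀ i j, 1 ≤ i → i ≤ j → j ≤ n + 1 → v i ≤ v j := by
    intro i j h1 hij hj
    induction j with
    | zero => omega
    | succ m ihm =>
      rcases Nat.lt_or_ge i (m + 1) with h | h
      · have him : i ≤ m := by omega
        exact le_trans (ihm him (by omega)) (hmono' m (le_trans h1 him) (by omega))
      · have : i = m + 1 := by omega
        subst this; exact le_refl _
  have hpos : ∀ i, 1 ≤ i → i ≤ n + 1 → 0 < v i := fun i h1 h2 =>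
    lt_of_lt_of_le hv1pos (hchain 1 i (le_refl 1) h1 h2)
  have hvbar0 : 0 < vbar := lt_of_lt_of_le hlow hbar
  set Q : ℝ := ∑ k ∈ Finset.Icc 1 n, (v (k + 1) - v k) / v k with hQ
  have hR : v 2 / v 1 + ∑ i ∈ Finset.Icc 2 n, (v (i + 1) - v i) / v i = 1 + Q := by
    rw [hQ, aux_split n hn (fun k => (v (k + 1) - v k) / v k)]
    have h21 : v 2 / v 1 = 1 + (v 2 - v 1) / v 1 := by field_simp; ring
    rw [h21]; ring
  have hQr : r = (1 + Q)⁻¹ := by rw [hr, hR]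
  have hQ0 : 0 ≤ Q := Finset.sum_nonneg fun k hk => by
    obtain ⟨hk1, hk2⟩ := Finset.mem_Icc.1 hk
    exact div_nonneg (sub_nonneg.2 (hmono' k hk1 hk2)) (hpos k hk1 (by omega)).le
  have hQpos : 0 < 1 + Q := by linarith
  have hrpos : 0 < r := by rw [hQr]; positivity
  -- Part 1
  have part1 : ∀ x : ℕ → ℝ, (∀ i ∈ Finset.Icc 1 n, 0 ≤ x i) →
      ∑ i ∈ Finset.Icc 1 n, x i = 1 → suppCR vlow vbar n v x ≤ r := by
    intro x hx0 hxsum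
    set s := suppCR vlow vbar n v x with hs
    have hvx0 : ∀ i ∈ Finset.Icc 1 n, 0 ≤ v i * x i := fun i hi => by
      obtain ⟨hi1, hi2⟩ := Finset.mem_Icc.1 hi
      exact mul_nonneg (hpos i hi1 (by omega)).le (hx0 i hi)
    have hs0 : 0 ≤ s := aux_suppCR_nonneg hlow hbar hvx0
    have hdir : ∀ c, vlow ≤ c → c ≤ vbar →
        s * c ≤ ∑ i ∈ Finset.Icc 1 n, (if v i ≤ c then v i * x i else 0) := by
      intro c h1 h2
      have hc0 : 0 < c := lt_of_lt_of_le hlow h1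
      have hcr := aux_suppCR_le hlow hbar hvx0 (aux_dirac_mem hlow h1 h2)
      rw [aux_hindsight_dirac hc0.le h2] at hcr
      have hmr : mechRev vbar n v x (Measure.dirac c)
          = ∑ i ∈ Finset.Icc 1 n, (if v i ≤ c then v i * x i else 0) := by
        refine Finset.sum_congr rfl fun i hi => ?_
        by_cases h : v i ≤ c
        · rw [if_pos h, aux_dirac_Icc_one h h2]; simp
        · rw [if_neg h, aux_dirac_Icc_zero (not_le.1 h)]; simp
      rw [hmr] at hcr
      exact (le_div_iff₀ hc0).1 hcr
    have hTS : ∀ k, 1 ≤ k → k ≤ n → ∀ c, v k ≤ c → c < v (k + 1) →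
        (∑ i ∈ Finset.Icc 1 n, if v i ≤ c then v i * x i else 0)
          = ∑ i ∈ Finset.Icc 1 k, v i * x i := by
      intro k hk1 hk2 c hc1 hc2
      rw [aux_split_at n k hk2 (fun i => if v i ≤ c then v i * x i else 0)]
      have h1 : ∑ i ∈ Finset.Icc 1 k, (if v i ≤ c then v i * x i else 0)
          = ∑ i ∈ Finset.Icc 1 k, v i * x i :=
        Finset.sum_congr rfl fun i hi => by
          obtain ⟨hi1, hi2⟩ := Finset.mem_Icc.1 hi
          exact if_pos (le_trans (hchain i k hi1 hi2 (by omega)) hc1)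
      have h2 : ∑ i ∈ Finset.Icc (k + 1) n, (if v i ≤ c then v i * x i else 0) = 0 := by
        refine Finset.sum_eq_zero fun i hi => ?_
        obtain ⟨hi1, hi2⟩ := Finset.mem_Icc.1 hi
        exact if_neg (not_le.2 (lt_of_lt_of_le hc2 (hchain (k + 1) i (by omega) hi1 (by omega))))
      rw [h1, h2, add_zero]
    have hkey : ∀ k, 1 ≤ k → k ≤ n → v k < v (k + 1) →
        s * v (k + 1) ≤ ∑ i ∈ Finset.Icc 1 k, v i * x i := by
      intro k hk1 hk2 hlt
      set Sk := ∑ i ∈ Finset.Icc 1 k, v i * x i with hSk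
      have hSk0 : 0 ≤ Sk := Finset.sum_nonneg fun i hi => by
        obtain ⟨hi1, hi2⟩ := Finset.mem_Icc.1 hi
        exact hvx0 i (Finset.mem_Icc.2 ⟨hi1, by omega⟩)
      have hcon : ∀ c, v k ≤ c → c < v (k + 1) → s * c ≤ Sk := by
        intro c hc1 hc2
        have hvlc : vlow ≤ c := le_trans (hv1 ▸ hchain 1 k (le_refl 1) hk1 (by omega)) hc1
        have hcv : c ≤ vbar :=
          le_of_lt (lt_of_lt_of_le hc2 (hvtop ▸ hchain (k + 1) (n + 1) (by omega) (by omega) (le_refl _)))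
        have := hdir c hvlc hcv
        rwa [hTS k hk1 hk2 c hc1 hc2] at this
      by_contra hcon2
      push_neg at hcon2
      have hspos : 0 < s := by
        rcases lt_or_eq_of_le hs0 with h | h
        · exact h
        · exfalso
          have : (0:ℝ) * v (k + 1) ≤ Sk := by
            rw [zero_mul]; exact hSk0
          rw [← h] at hcon2; linarith
      have hk0 : v k * s ≤ Sk := by
        have := hcon (v k) (le_refl _) hlt; linarith [this]
      have hk0' : v k ≤ Sk / s := (le_div_iff₀ hspos).2 hk0
      have hklt : Sk / s < v (k + 1) := (div_lt_iff₀ hspos).2 (by linarith)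
      set c := (Sk / s + v (k + 1)) / 2 with hc
      have h1 : Sk / s < c := by rw [hc]; linarith
      have h2 : c < v (k + 1) := by rw [hc]; linarith
      have h3 : v k ≤ c := le_trans hk0' h1.le
      have h4 := hcon c h3 h2
      have h5 : Sk < c * s := (div_lt_iff₀ hspos).1 h1
      nlinarith
    have htop : s * vbar ≤ ∑ i ∈ Finset.Icc 1 n, v i * x i := by
      have h := hdir vbar hbar (le_refl _)
      have heq : (∑ i ∈ Finset.Icc 1 n, if v i ≤ vbar then v i * x i else 0)
          = ∑ i ∈ Finset.Icc 1 n, v i * x i :=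
        Finset.sum_congr rfl fun i hi => by
          obtain ⟨hi1, hi2⟩ := Finset.mem_Icc.1 hi
          exact if_pos (hvtop ▸ hchain i (n + 1) hi1 (by omega) (le_refl _))
      rwa [heq] at h
    have habel := aux_abel v x n (fun k hk1 hk2 => (hpos k hk1 (by omega)).ne')
    rw [hxsum] at habel
    have hterm : ∀ k ∈ Finset.Icc 1 n,
        ((v k)⁻¹ - (v (k + 1))⁻¹) * (s * v (k + 1))
          ≤ ((v k)⁻¹ - (v (k + 1))⁻¹) * (∑ i ∈ Finset.Icc 1 k, v i * x i) := by
      intro k hk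
      obtain ⟨hk1, hk2⟩ := Finset.mem_Icc.1 hk
      rcases lt_or_eq_of_le (hmono' k hk1 hk2) with h | h
      · have hcoef : 0 ≤ (v k)⁻¹ - (v (k + 1))⁻¹ := by
          have := one_div_le_one_div_of_le (hpos k hk1 (by omega)) h.le
          simp only [one_div] at this; linarith
        exact mul_le_mul_of_nonneg_left (hkey k hk1 hk2 h) hcoef
      · rw [← h]; simp
    have hcv : ∀ k ∈ Finset.Icc 1 n,
        ((v k)⁻¹ - (v (k + 1))⁻¹) * (s * v (k + 1)) = s * ((v (k + 1) - v k) / v k) := by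
      intro k hk
      obtain ⟨hk1, hk2⟩ := Finset.mem_Icc.1 hk
      have h1 : v k ≠ 0 := (hpos k hk1 (by omega)).ne'
      have h2 : v (k + 1) ≠ 0 := (hpos (k + 1) (by omega) (by omega)).ne'
      field_simp
    have hstop : s ≤ (∑ i ∈ Finset.Icc 1 n, v i * x i) * (v (n + 1))⁻¹ := by
      rw [hvtop, ← div_eq_mul_inv]
      exact (le_div_iff₀ hvbar0).2 htop
    have hfinal : s * (1 + Q) ≤ 1 := by
      calc s * (1 + Q)
          = (∑ k ∈ Finset.Icc 1 n, s * ((v (k + 1) - v k) / v k)) + s := by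
            rw [mul_add, mul_one, Finset.mul_sum, add_comm]
        _ = (∑ k ∈ Finset.Icc 1 n, ((v k)⁻¹ - (v (k + 1))⁻¹) * (s * v (k + 1))) + s := by
            rw [Finset.sum_congr rfl hcv]
        _ ≤ (∑ k ∈ Finset.Icc 1 n,
              ((v k)⁻¹ - (v (k + 1))⁻¹) * (∑ i ∈ Finset.Icc 1 k, v i * x i))
              + (∑ i ∈ Finset.Icc 1 n, v i * x i) * (v (n + 1))⁻¹ :=
            add_le_add (Finset.sum_le_sum hterm) hstop
        _ = 1 := habel
    rw [hQr, ← one_div]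
    exact (le_div_iff₀ hQpos).2 hfinal
  refine ⟨part1, ?_⟩
  -- Part 2
  set x : ℕ → ℝ := fun i => if i = 1 then r * (v 2 / v 1) else r * ((v (i + 1) - v i) / v i)
    with hxdef
  have hx1 : x 1 = r * (v 2 / v 1) := by simp [hxdef]
  have hxi : ∀ i, 2 ≤ i → x i = r * ((v (i + 1) - v i) / v i) := fun i h2 => by
    simp only [hxdef]; rw [if_neg (by omega)]
  have hx0 : ∀ i ∈ Finset.Icc 1 n, 0 ≤ x i := by
    intro i hi
    obtain ⟨hi1, hi2⟩ := Finset.mem_Icc.1 hi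
    by_cases h : i = 1
    · subst h; rw [hx1]
      exact mul_nonneg hrpos.le (div_nonneg (hpos 2 (by omega) (by omega)).le hv1pos.le)
    · rw [hxi i (by omega)]
      exact mul_nonneg hrpos.le
        (div_nonneg (sub_nonneg.2 (hmono' i hi1 hi2)) (hpos i hi1 (by omega)).le)
  have hxsum : ∑ i ∈ Finset.Icc 1 n, x i = 1 := by
    rw [aux_split n hn x, hx1,
        Finset.sum_congr rfl (fun i hi => hxi i (Finset.mem_Icc.1 hi).1),
        ← Finset.mul_sum, ← mul_add, hR, hQr]
    exact inv_mul_cancel₀ hQpos.ne'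
  have hmech : ∀ F : Measure ℝ, (F (Icc (v 1) vbar)).toReal = 1 →
      mechRev vbar n v x F
        = r * (v 1 + ∑ i ∈ Finset.Icc 1 n, (v (i + 1) - v i) * (F (Icc (v i) vbar)).toReal) := by
    intro F hF1
    unfold mechRev
    rw [aux_split n hn (fun i => v i * x i * (F (Icc (v i) vbar)).toReal),
        aux_split n hn (fun i => (v (i + 1) - v i) * (F (Icc (v i) vbar)).toReal),
        hx1, hF1]
    have hsum2 : ∑ i ∈ Finset.Icc 2 n, v i * x i * (F (Icc (v i) vbar)).toReal
        = ∑ i ∈ Finset.Icc 2 n, r * ((v (i + 1) - v i) * (F (Icc (v i) vbar)).toReal) := by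
      refine Finset.sum_congr rfl fun i hi => ?_
      obtain ⟨hi1, hi2⟩ := Finset.mem_Icc.1 hi
      rw [hxi i hi1]
      have hne : v i ≠ 0 := (hpos i (by omega) (by omega)).ne'
      field_simp
    rw [hsum2, ← Finset.mul_sum]
    have hne : v 1 ≠ 0 := hv1pos.ne'
    field_simp
    ring
  have hG1 : ∀ F ∈ Fsupp vlow vbar, (F (Icc (v 1) vbar)).toReal = 1 := fun F hF => by
    rw [hv1, hF.2.2, ENNReal.toReal_one]
  have hWbound : ∀ F ∈ Fsupp vlow vbar, ∀ p : ℝ, 0 ≤ p → p ≤ vbar →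
      p * (F (Icc p vbar)).toReal
        ≤ v 1 + ∑ i ∈ Finset.Icc 1 n, (v (i + 1) - v i) * (F (Icc (v i) vbar)).toReal := by
    intro F hF p hp0 hpv
    haveI hprob : IsProbabilityMeasure F := hF.1
    set g : ℝ → ℝ := fun q => (F (Icc q vbar)).toReal with hg
    have hg0 : ∀ q, 0 ≤ g q := fun q => ENNReal.toReal_nonneg
    have hg1 : ∀ q, g q ≤ 1 := fun q => by
      have := ENNReal.toReal_mono (by simp) (prob_le_one (μ := F) (s := Icc q vbar))
      simpa [hg] using this
    have hgmono : ∀ a b : ℝ, a ≤ b → g b ≤ g a := fun a b hab =>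
      ENNReal.toReal_mono (measure_ne_top F _) (measure_mono (Icc_subset_Icc_left hab))
    have hsumnn : ∀ (t : Finset ℕ), (∀ i ∈ t, 1 ≤ i ∧ i ≤ n) →
        0 ≤ ∑ i ∈ t, (v (i + 1) - v i) * g (v i) := fun t ht =>
      Finset.sum_nonneg fun i hi =>
        mul_nonneg (sub_nonneg.2 (hmono' i (ht i hi).1 (ht i hi).2)) (hg0 _)
    by_cases hp1 : p ≤ v 1
    · have h1 : p * g p ≤ p := by
        calc p * g p ≤ p * 1 := mul_le_mul_of_nonneg_left (hg1 p) hp0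
          _ = p := mul_one p
      have h2 : 0 ≤ ∑ i ∈ Finset.Icc 1 n, (v (i + 1) - v i) * g (v i) :=
        hsumnn _ fun i hi => ⟨(Finset.mem_Icc.1 hi).1, (Finset.mem_Icc.1 hi).2⟩
      linarith
    · push_neg at hp1
      set k := Nat.findGreatest (fun i => v i < p) n with hk
      have hk1 : 1 ≤ k := Nat.le_findGreatest hn hp1
      have hkn : k ≤ n := Nat.findGreatest_le n
      have hvk : v k < p := by
        rw [hk]; exact Nat.findGreatest_spec (P := fun i => v i < p) hn hp1
      have hgr : ∀ m, k < m → m ≤ n → ¬ v m < p := by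
        intro m h1 h2
        rw [hk] at h1
        exact Nat.findGreatest_is_greatest h1 h2
      have hpk1 : p ≤ v (k + 1) := by
        rcases lt_or_eq_of_le hkn with h | h
        · by_contra hh; push_neg at hh
          exact hgr (k + 1) (Nat.lt_succ_self k) (by omega) hh
        · rw [h, hvtop]; exact hpv
      have step1 : p * g p ≤ v (k + 1) * g (v k) :=
        mul_le_mul hpk1 (hgmono _ _ hvk.le) (hg0 _) (hpos (k + 1) (by omega) (by omega)).le
      have htel : ∑ i ∈ Finset.Icc 1 k, (v (i + 1) - v i) = v (k + 1) - v 1 :=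
        aux_telescope v k
      have hterm2 : ∀ i ∈ Finset.Icc 1 k,
          (v (i + 1) - v i) * g (v k) ≤ (v (i + 1) - v i) * g (v i) := by
        intro i hi
        obtain ⟨hi1, hi2⟩ := Finset.mem_Icc.1 hi
        exact mul_le_mul_of_nonneg_left (hgmono _ _ (hchain i k hi1 hi2 (by omega)))
          (sub_nonneg.2 (hmono' i hi1 (by omega)))
      have step2 : v (k + 1) * g (v k)
          ≤ v 1 + ∑ i ∈ Finset.Icc 1 k, (v (i + 1) - v i) * g (v i) := by
        have hv1g : v 1 * g (v k) ≤ v 1 :=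
          calc v 1 * g (v k) ≤ v 1 * 1 := mul_le_mul_of_nonneg_left (hg1 _) hv1pos.le
            _ = v 1 := mul_one _
        calc v (k + 1) * g (v k) = v 1 * g (v k) + (v (k + 1) - v 1) * g (v k) := by ring
          _ ≤ v 1 + (v (k + 1) - v 1) * g (v k) := by linarith
          _ = v 1 + ∑ i ∈ Finset.Icc 1 k, (v (i + 1) - v i) * g (v k) := by
              rw [← Finset.sum_mul, htel]
          _ ≤ v 1 + ∑ i ∈ Finset.Icc 1 k, (v (i + 1) - v i) * g (v i) :=
              add_le_add (le_refl _) (Finset.sum_le_sum hterm2)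
      have step3 : ∑ i ∈ Finset.Icc 1 k, (v (i + 1) - v i) * g (v i)
          ≤ ∑ i ∈ Finset.Icc 1 n, (v (i + 1) - v i) * g (v i) := by
        refine Finset.sum_le_sum_of_subset_of_nonneg (Finset.Icc_subset_Icc_right hkn) ?_
        intro i hi _
        obtain ⟨hi1, hi2⟩ := Finset.mem_Icc.1 hi
        exact mul_nonneg (sub_nonneg.2 (hmono' i hi1 hi2)) (hg0 _)
      calc p * g p ≤ v (k + 1) * g (v k) := step1
        _ ≤ v 1 + ∑ i ∈ Finset.Icc 1 k, (v (i + 1) - v i) * g (v i) := step2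
        _ ≤ v 1 + ∑ i ∈ Finset.Icc 1 n, (v (i + 1) - v i) * g (v i) :=
            add_le_add (le_refl _) step3
  have hlo : r ≤ suppCR vlow vbar n v x := by
    haveI : Nonempty ↥(Fsupp vlow vbar) :=
      ⟨⟨Measure.dirac vlow, aux_dirac_mem hlow (le_refl _) hbar⟩⟩
    refine le_ciInf ?_
    rintro ⟨F, hF⟩
    have hopt_pos : 0 < hindsightOpt vbar F :=
      lt_of_lt_of_le hlow (aux_hindsight_ge hlow hbar hF)
    rw [le_div_iff₀ hopt_pos, hmech F (hG1 F hF)]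
    have hopt_le : hindsightOpt vbar F
        ≤ v 1 + ∑ i ∈ Finset.Icc 1 n, (v (i + 1) - v i) * (F (Icc (v i) vbar)).toReal := by
      haveI : Nonempty (Icc (0:ℝ) vbar) := ⟨⟨0, le_refl 0, hvbar0.le⟩⟩
      refine ciSup_le ?_
      rintro ⟨p, hp0, hpv⟩
      exact hWbound F hF p hp0 hpv
    exact mul_le_mul_of_nonneg_left hopt_le hrpos.le
  exact ⟨x, hx0, hxsum, hx1, fun i h2 _ => hxi i h2,
    le_antisymm (part1 x hx0 hxsum) hlo⟩
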